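/- Let α be a partial action of ℤ on a topological space X. Then the set Ω(α) of partially non-wandering points is α-invariant: if x ∈ Ω(α) and i ∈ ℤ is such that x ∈ X_{-i}, then α_i(x) ∈ Ω(α). -/

import Mathlib

open Filter Topology Set

/-- A partial action of the group `ℤ` on a topological space `X`:
open domains `dom n` with `dom 0 = X`, homeomorphisms `act n : dom (-n) → dom n`
(here encoded as globally defined maps, continuous on their domains), satisfying
`α_n(X_{-n} ∩ X_m) = X_n ∩ X_{n+m}` and `α_n ∘ α_m = α_{n+m}` on `X_{-m} ∩ X_{-m-n}`. -/
structure PartialZAction (X : Type*) [TopologicalSpace X] where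
  dom : ℤ → Set X
  act : ℤ → X → X
  isOpen_dom : ∀ n : ℤ, IsOpen (dom n)
  dom_zero : dom 0 = Set.univ
  act_zero : ∀ x : X, act 0 x = x
  image_inter : ∀ n m : ℤ, act n '' (dom (-n) ∩ dom m) = dom n ∩ dom (n + m)
  act_act : ∀ (n m : ℤ) (x : X), x ∈ dom (-m) → x ∈ dom (-m - n) →
    act n (act m x) = act (n + m) x
  continuousOn : ∀ n : ℤ, ContinuousOn (act n) (dom (-n))

variable {X : Type*} [TopologicalSpace X]

/-- `I_n(x) = {i ∈ {0,…,n-1} : x ∈ X_{-i}}`. -/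
def Iset (α : PartialZAction X) (n : ℕ) (x : X) : Set ℕ :=
  {i : ℕ | i < n ∧ x ∈ α.dom (-(i : ℤ))}

/-- `d_n(x,y) = max_{i ∈ I_n(x) ∩ I_n(y)} ρ(α_i(x), α_i(y))`. -/
noncomputable def dynDist (ρ : X → X → ℝ) (α : PartialZAction X) (n : ℕ) (x y : X) : ℝ :=
  sSup ((fun i : ℕ => ρ (α.act i x) (α.act i y)) '' (Iset α n x ∩ Iset α n y))

/-- `A` is `(n,ε)`-separated. -/
def IsPSeparated (ρ : X → X → ℝ) (α : PartialZAction X) (n : ℕ) (ε : ℝ) (A : Set X) : Prop :=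
  ∀ x ∈ A, ∀ y ∈ A, x ≠ y → ε ≤ dynDist ρ α n x y

/-- `B` is `(n,ε)`-spanning for `K`. -/
def IsPSpanning (ρ : X → X → ℝ) (α : PartialZAction X) (n : ℕ) (ε : ℝ) (K B : Set X) : Prop :=
  ∀ x ∈ K, ∃ y ∈ B, Iset α n x = Iset α n y ∧ dynDist ρ α n x y < ε

/-- `𝒰` is an open `(n,ε)`-cover of `K`. -/
def IsPCover (ρ : X → X → ℝ) (α : PartialZAction X) (n : ℕ) (ε : ℝ) (K : Set X)
    (𝒰 : Set (Set X)) : Prop :=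
  (∀ U ∈ 𝒰, IsOpen U) ∧ K ⊆ ⋃₀ 𝒰 ∧ ∀ U ∈ 𝒰, ∀ x ∈ U, ∀ y ∈ U, dynDist ρ α n x y < ε

/-- `sep(n,ε,α,K)`: maximal cardinality of an `(n,ε)`-separated subset of `K`. -/
noncomputable def sepCount (ρ : X → X → ℝ) (α : PartialZAction X) (n : ℕ) (ε : ℝ)
    (K : Set X) : ℕ :=
  sSup {m : ℕ | ∃ A : Finset X, ↑A ⊆ K ∧ IsPSeparated ρ α n ε ↑A ∧ A.card = m}

/-- `span(n,ε,α,K)`: minimal cardinality of an `(n,ε)`-spanning subset of `K`. -/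
noncomputable def spanCount (ρ : X → X → ℝ) (α : PartialZAction X) (n : ℕ) (ε : ℝ)
    (K : Set X) : ℕ :=
  sInf {m : ℕ | ∃ B : Finset X, ↑B ⊆ K ∧ IsPSpanning ρ α n ε K ↑B ∧ B.card = m}

/-- `cov(n,ε,α,K)`: minimal cardinality of a finite `(n,ε)`-cover of `K`. -/
noncomputable def covCount (ρ : X → X → ℝ) (α : PartialZAction X) (n : ℕ) (ε : ℝ)
    (K : Set X) : ℕ :=
  sInf {m : ℕ | ∃ 𝒰 : Finset (Set X), IsPCover ρ α n ε K ↑𝒰 ∧ 𝒰.card = m}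

/-- `h_ε(α,K) = limsup_n (1/n) log sep(n,ε,α,K)`. -/
noncomputable def entSep (ρ : X → X → ℝ) (α : PartialZAction X) (K : Set X) (ε : ℝ) : EReal :=
  Filter.limsup (fun n : ℕ => ((Real.log (sepCount ρ α n ε K) / n : ℝ) : EReal)) Filter.atTop

/-- The partial topological entropy `ℏ_ρ(α) = sup_{K compact} lim_{ε→0} h_ε(α,K)`
(the limit as `ε → 0` is the supremum over `ε > 0` by monotonicity). -/
noncomputable def pEntropy (ρ : X → X → ℝ) (α : PartialZAction X) : EReal :=
  ⨆ (K : Set X) (_ : IsCompact K), ⨆ (ε : ℝ) (_ : 0 < ε), entSep ρ α K ε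


/-- The set `Ω(α)` of partially non-wandering points: points `x` for which there is a
sequence of natural numbers `n_i → ∞` with `x ∈ X_{-n_i}` for all `i` and
`α_{n_i}(x) → x`. -/
def pNonWandering (α : PartialZAction X) : Set X :=
  {x | ∃ u : ℕ → ℕ, Filter.Tendsto u Filter.atTop Filter.atTop ∧
    (∀ i : ℕ, x ∈ α.dom (-(u i : ℤ))) ∧
    Filter.Tendsto (fun i : ℕ => α.act (u i : ℤ) x) Filter.atTop (nhds x)}

lemma PartialZAction.act_mem_dom (α : PartialZAction X) (n : ℤ) (x : X)
    (hx : x ∈ α.dom (-n)) : α.act n x ∈ α.dom n := by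
  have h := α.image_inter n 0
  have : α.act n x ∈ α.act n '' (α.dom (-n) ∩ α.dom 0) :=
    ⟨x, ⟨hx, by simp [α.dom_zero]⟩, rfl⟩
  rw [h] at this
  exact this.1

lemma PartialZAction.act_neg_act (α : PartialZAction X) (n : ℤ) (x : X)
    (hx : x ∈ α.dom (-n)) : α.act (-n) (α.act n x) = x := by
  have h := α.act_act (-n) n x hx (by simp [α.dom_zero])
  simpa [α.act_zero] using h

/-- the partially non-wandering set is `α`-invariant. -/
theorem stmt15 {X : Type*} [TopologicalSpace X] (α : PartialZAction X)
    (x : X) (hx : x ∈ pNonWandering α) (i : ℤ) (hxi : x ∈ α.dom (-i)) :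
    α.act i x ∈ pNonWandering α := by
  obtain ⟨u, hu, hdom, hconv⟩ := hx
  have hopen := α.isOpen_dom (-i)
  have hev : ∀ᶠ j in atTop, α.act (u j) x ∈ α.dom (-i) :=
    hconv.eventually (hopen.mem_nhds hxi)
  obtain ⟨N, hN⟩ := eventually_atTop.mp hev
  set v : ℕ → ℕ := fun j => u (j + N) with hv
  have hvt : Filter.Tendsto v atTop atTop := hu.comp (tendsto_add_atTop_nat N)
  -- x ∈ dom (-(v j) + -i) for all j
  have hback : ∀ j, x ∈ α.dom (-(v j : ℤ) + -i) := by
    intro j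
    have h1 : x ∈ α.dom (-(v j : ℤ)) := hdom (j + N)
    have h2 : α.act (v j) x ∈ α.dom (-i) := hN (j + N) (Nat.le_add_left N j)
    have h3 : α.act (v j) x ∈ α.dom (v j) := α.act_mem_dom _ _ h1
    have h4 : α.act (-(v j : ℤ)) (α.act (v j) x) ∈
        α.act (-(v j : ℤ)) '' (α.dom (-(-(v j : ℤ))) ∩ α.dom (-i)) := by
      refine ⟨α.act (v j) x, ⟨by simpa using h3, h2⟩, rfl⟩
    rw [α.image_inter (-(v j : ℤ)) (-i), α.act_neg_act _ _ h1] at h4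
    exact h4.2
  -- α.act i x ∈ dom (-(v j))
  have hydom : ∀ j, α.act i x ∈ α.dom (-(v j : ℤ)) := by
    intro j
    have h1 : x ∈ α.dom (-i - (v j : ℤ)) := by
      have := hback j; rwa [show (-(v j : ℤ) + -i) = -i - (v j : ℤ) by ring] at this
    have h4 : α.act i x ∈ α.act i '' (α.dom (-i) ∩ α.dom (-i - (v j : ℤ))) :=
      ⟨x, ⟨hxi, h1⟩, rfl⟩
    rw [α.image_inter i (-i - (v j : ℤ))] at h4
    have := h4.2
    rwa [show (i + (-i - (v j : ℤ))) = -(v j : ℤ) by ring] at this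
  -- commutation
  have hcomm : ∀ j, α.act (v j) (α.act i x) = α.act i (α.act (v j) x) := by
    intro j
    have h1 : x ∈ α.dom (-(v j : ℤ)) := hdom (j + N)
    have ha : α.act (v j) (α.act i x) = α.act ((v j : ℤ) + i) x := by
      refine α.act_act (v j) i x hxi ?_
      have := hback j; rwa [show (-(v j : ℤ) + -i) = -i - (v j : ℤ) by ring] at this
    have hb : α.act i (α.act (v j) x) = α.act (i + (v j : ℤ)) x := by
      refine α.act_act i (v j) x h1 ?_
      have := hback j; rwa [show (-(v j : ℤ) + -i) = -(v j : ℤ) - i by ring] at this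
    rw [ha, hb, add_comm]
  -- convergence
  have hconv2 : Filter.Tendsto (fun j => α.act (v j : ℤ) x) atTop (nhds x) :=
    hconv.comp (tendsto_add_atTop_nat N)
  have hcAt : ContinuousAt (α.act i) x :=
    (α.continuousOn i).continuousAt (hopen.mem_nhds hxi)
  have hmain : Filter.Tendsto (fun j => α.act (v j : ℤ) (α.act i x)) atTop
      (nhds (α.act i x)) := by
    have := hcAt.tendsto.comp hconv2
    simpa [Function.comp_def, hcomm] using this
  exact ⟨v, hvt, hydom, hmain⟩
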